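/- The function h(r) := 2·e^{2r}·E(4r) − E(2r) is strictly positive and strictly decreasing on (0,∞); indeed its derivative satisfies h'(r) = −e^{2r}·∫_r^∞ e^{−4s}·s^{−2} ds < 0 for all r > 0. -/

import Mathlib

open Real Set Filter MeasureTheory Topology

/-- `E x = ∫_x^∞ e^{-t}/t dt`, so that `Ei(-x) = -E x` for `x > 0`. -/
noncomputable def expInt (x : ℝ) : ℝ := ∫ t in Set.Ioi x, Real.exp (-t) / t

/-- `h(r) = 2 e^{2r} E(4r) - E(2r) = -r e^{r} g(r)`. -/
noncomputable def hfun (r : ℝ) : ℝ := 2 * Real.exp (2 * r) * expInt (4 * r) - expInt (2 * r)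

lemma intOn (c : ℝ) (hc : 0 < c) {x : ℝ} (hx : 0 < x) :
    IntegrableOn (fun t => Real.exp (-(c*t)) / t) (Set.Ioi x) := by
  have hg : IntegrableOn (fun t => Real.exp (-(c*t)) / x) (Set.Ioi x) := by
    have := (exp_neg_integrableOn_Ioi x hc).div_const x
    simpa [neg_mul, IntegrableOn] using this
  refine hg.mono' ?_ ?_
  · refine (ContinuousOn.aestronglyMeasurable ?_ measurableSet_Ioi)
    exact ContinuousOn.div (by fun_prop) continuousOn_id
      (fun t ht => ne_of_gt (hx.trans ht))
  · filter_upwards [ae_restrict_mem measurableSet_Ioi] with t ht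
    have htpos : 0 < t := hx.trans ht
    rw [Real.norm_eq_abs, abs_of_nonneg (by positivity)]
    exact div_le_div_of_nonneg_left (Real.exp_pos _).le hx (le_of_lt ht)

lemma expInt_integrableOn {x : ℝ} (hx : 0 < x) :
    IntegrableOn (fun t => Real.exp (-t) / t) (Set.Ioi x) := by
  have := intOn 1 one_pos hx
  simpa using this

lemma expInt_nonneg {x : ℝ} (hx : 0 < x) : 0 ≤ expInt x := by
  apply setIntegral_nonneg measurableSet_Ioi
  intro t ht
  have : 0 < t := hx.trans ht
  positivity

lemma expInt_le {x : ℝ} (hx : 0 < x) : expInt x ≤ Real.exp (-x) / x := by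
  have h1 : expInt x ≤ ∫ t in Set.Ioi x, Real.exp (-t) / x := by
    apply setIntegral_mono_on (expInt_integrableOn hx)
      (by simpa [neg_mul, IntegrableOn] using (exp_neg_integrableOn_Ioi x one_pos).div_const x)
      measurableSet_Ioi
    intro t ht
    exact div_le_div_of_nonneg_left (Real.exp_pos _).le hx (le_of_lt ht)
  calc expInt x ≤ ∫ t in Set.Ioi x, Real.exp (-t) / x := h1
    _ = (∫ t in Set.Ioi x, Real.exp (-t)) / x := by rw [integral_div]
    _ = Real.exp (-x) / x := by rw [integral_exp_neg_Ioi]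

lemma expInt_hasDerivAt {x : ℝ} (hx : 0 < x) :
    HasDerivAt expInt (-(Real.exp (-x) / x)) x := by
  set f : ℝ → ℝ := fun t => Real.exp (-t) / t with hf
  set a := x / 2 with ha'
  have ha : 0 < a := by positivity
  have hax : a < x := by simp only [ha']; linarith
  have hII : IntervalIntegrable f volume a x := by
    rw [intervalIntegrable_iff, uIoc_of_le hax.le]
    exact (expInt_integrableOn ha).mono_set Set.Ioc_subset_Ioi_self
  have hmeas : StronglyMeasurableAtFilter f (𝓝 x) :=
    ⟨univ, univ_mem, (((Real.measurable_exp.comp measurable_neg).div measurable_id).aestronglyMeasurable)⟩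
  have hcont : ContinuousAt f x :=
    ContinuousAt.div (by fun_prop) continuousAt_id hx.ne'
  have hD : HasDerivAt (fun y => expInt a - ∫ t in a..y, f t) (-(f x)) x := by
    simpa using
      (intervalIntegral.integral_hasDerivAt_right hII hmeas hcont).const_sub (expInt a)
  have key : ∀ y ∈ Set.Ioi a, expInt y = expInt a - ∫ t in a..y, f t := by
    intro y hy
    have hy' : a ≤ y := le_of_lt hy
    have hsplit : expInt a = (∫ t in Set.Ioc a y, f t) + expInt y := by
      rw [expInt, ← Set.Ioc_union_Ioi_eq_Ioi hy',
        setIntegral_union (Set.Ioc_disjoint_Ioi le_rfl) measurableSet_Ioi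
          ((expInt_integrableOn ha).mono_set Set.Ioc_subset_Ioi_self)
          (expInt_integrableOn (ha.trans_le hy'))]
      rfl
    rw [intervalIntegral.integral_of_le hy']
    rw [hsplit]
    ring
  have hEq : (fun y => expInt a - ∫ t in a..y, f t) =ᶠ[𝓝 x] expInt := by
    filter_upwards [isOpen_Ioi.mem_nhds hax] with y hy
    exact (key y hy).symm
  exact hD.congr_of_eventuallyEq hEq.symm

lemma expInt_comp_hasDerivAt (c : ℝ) (hc : 0 < c) {r : ℝ} (hr : 0 < r) :
    HasDerivAt (fun r => expInt (c * r)) (-(Real.exp (-(c * r)) / r)) r := by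
  have h := (expInt_hasDerivAt (show 0 < c * r by positivity)).comp r
    ((hasDerivAt_id r).const_mul c)
  refine h.congr_deriv ?_
  field_simp

lemma hfun_hasDerivAt {r : ℝ} (hr : 0 < r) :
    HasDerivAt hfun (4 * Real.exp (2 * r) * expInt (4 * r) - Real.exp (-(2 * r)) / r) r := by
  have h4 := expInt_comp_hasDerivAt 4 (by norm_num) hr
  have h2 := expInt_comp_hasDerivAt 2 (by norm_num) hr
  have hexp : HasDerivAt (fun r : ℝ => 2 * Real.exp (2 * r)) (4 * Real.exp (2 * r)) r := by
    have := (((hasDerivAt_id r).const_mul 2).exp).const_mul 2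
    refine this.congr_deriv ?_
    simp only [id_eq]
    ring_nf
  have := (hexp.mul h4).sub h2
  refine this.congr_deriv ?_
  have hee : Real.exp (2 * r) * Real.exp (-(4 * r)) = Real.exp (-(2 * r)) := by
    rw [← Real.exp_add]; ring_nf
  field_simp
  nlinarith [hee]

lemma intOn2 {r : ℝ} (hr : 0 < r) :
    IntegrableOn (fun s => Real.exp (-4 * s) / s ^ 2) (Set.Ioi r) := by
  have hg : IntegrableOn (fun s => Real.exp (-4 * s) / r ^ 2) (Set.Ioi r) :=
    (exp_neg_integrableOn_Ioi r (by norm_num : (0:ℝ) < 4)).div_const (r ^ 2)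
  refine hg.mono' ?_ ?_
  · refine (ContinuousOn.aestronglyMeasurable ?_ measurableSet_Ioi)
    exact ContinuousOn.div (by fun_prop) (by fun_prop)
      (fun t ht => by have := hr.trans ht; positivity)
  · filter_upwards [ae_restrict_mem measurableSet_Ioi] with t ht
    have htpos : 0 < t := hr.trans ht
    rw [Real.norm_eq_abs, abs_of_nonneg (by positivity)]
    apply div_le_div_of_nonneg_left (Real.exp_pos _).le (by positivity)
    exact pow_le_pow_left₀ hr.le (le_of_lt ht) 2

lemma expInt_tendsto_zero (c : ℝ) (hc : 0 < c) :
    Tendsto (fun s : ℝ => expInt (c * s)) atTop (𝓝 0) := by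
  have hmul : Tendsto (fun s : ℝ => c * s) atTop atTop :=
    Tendsto.const_mul_atTop hc tendsto_id
  have hnum : Tendsto (fun s : ℝ => Real.exp (-(c * s))) atTop (𝓝 0) := by
    simpa [Function.comp_def] using Real.tendsto_exp_neg_atTop_nhds_zero.comp hmul
  have hbound : Tendsto (fun s : ℝ => Real.exp (-(c * s)) / (c * s)) atTop (𝓝 0) :=
    hnum.div_atTop hmul
  apply squeeze_zero'
  · filter_upwards [eventually_gt_atTop 0] with s hs
    exact expInt_nonneg (by positivity)
  · filter_upwards [eventually_gt_atTop 0] with s hs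
    exact expInt_le (by positivity)
  · exact hbound

lemma key_integral {r : ℝ} (hr : 0 < r) :
    ∫ s in Set.Ioi r, Real.exp (-4 * s) / s ^ 2
      = Real.exp (-(4 * r)) / r - 4 * expInt (4 * r) := by
  set G : ℝ → ℝ := fun s => -(Real.exp (-(4 * s)) / s) + 4 * expInt (4 * s) with hGdef
  have hG : ∀ s ∈ Set.Ici r, HasDerivAt G (Real.exp (-4 * s) / s ^ 2) s := by
    intro s hs
    have hs0 : 0 < s := lt_of_lt_of_le hr hs
    have h1 : HasDerivAt (fun s : ℝ => Real.exp (-(4 * s)) / s)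
        ((-4 * Real.exp (-(4 * s)) * s - Real.exp (-(4 * s)) * 1) / s ^ 2) s := by
      have hnum : HasDerivAt (fun s : ℝ => Real.exp (-(4 * s))) (-4 * Real.exp (-(4 * s))) s := by
        have := (((hasDerivAt_id s).const_mul 4).neg).exp
        refine this.congr_deriv ?_
        simp only [id_eq, Pi.neg_apply]
        ring_nf
      exact hnum.div (hasDerivAt_id s) hs0.ne'
    have h2 := (expInt_comp_hasDerivAt 4 (by norm_num) hs0).const_mul 4
    have := (h1.neg).add h2
    refine this.congr_deriv ?_
    field_simp
    ring
  have hlim : Tendsto G atTop (𝓝 0) := by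
    have hmul : Tendsto (fun s : ℝ => (4:ℝ) * s) atTop atTop :=
      Tendsto.const_mul_atTop (by norm_num) tendsto_id
    have hnum : Tendsto (fun s : ℝ => Real.exp (-(4 * s))) atTop (𝓝 0) := by
      simpa [Function.comp_def] using Real.tendsto_exp_neg_atTop_nhds_zero.comp hmul
    have p1 : Tendsto (fun s : ℝ => Real.exp (-(4 * s)) / s) atTop (𝓝 0) :=
      hnum.div_atTop tendsto_id
    have p2 := (expInt_tendsto_zero 4 (by norm_num)).const_mul 4
    have := (p1.neg).add p2
    simpa using this
  have := integral_Ioi_of_hasDerivAt_of_tendsto' hG (intOn2 hr) hlim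
  rw [this]
  simp [hGdef]
  ring

lemma deriv_hfun_eq {r : ℝ} (hr : 0 < r) :
    deriv hfun r = -(Real.exp (2 * r) * ∫ s in Set.Ioi r, Real.exp (-4 * s) / s ^ 2) := by
  rw [(hfun_hasDerivAt hr).deriv, key_integral hr]
  have hee : Real.exp (2 * r) * Real.exp (-(4 * r)) = Real.exp (-(2 * r)) := by
    rw [← Real.exp_add]; ring_nf
  field_simp
  nlinarith [hee]

lemma int_pos {r : ℝ} (hr : 0 < r) :
    0 < ∫ s in Set.Ioi r, Real.exp (-4 * s) / s ^ 2 := by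
  rw [setIntegral_pos_iff_support_of_nonneg_ae ?_ (intOn2 hr)]
  · refine lt_of_lt_of_le ?_ (measure_mono (Set.subset_inter ?_ (le_refl _)))
    · rw [Real.volume_Ioi]
      exact ENNReal.zero_lt_top
    · intro s hs
      have hs0 : 0 < s := hr.trans hs
      simp only [Function.mem_support]
      positivity
  · filter_upwards [ae_restrict_mem measurableSet_Ioi] with t ht
    have : 0 < t := hr.trans ht
    positivity

lemma hfun_tendsto : Tendsto hfun atTop (𝓝 0) := by
  have hmul : Tendsto (fun s : ℝ => (2:ℝ) * s) atTop atTop :=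
    Tendsto.const_mul_atTop (by norm_num) tendsto_id
  have hnum : Tendsto (fun s : ℝ => Real.exp (-(2 * s))) atTop (𝓝 0) := by
    simpa [Function.comp_def] using Real.tendsto_exp_neg_atTop_nhds_zero.comp hmul
  have hbound : Tendsto (fun r : ℝ => Real.exp (-(2 * r)) / (2 * r)) atTop (𝓝 0) :=
    hnum.div_atTop hmul
  have hbneg : Tendsto (fun r : ℝ => -(Real.exp (-(2 * r)) / (2 * r))) atTop (𝓝 0) := by
    simpa using hbound.neg
  apply tendsto_of_tendsto_of_tendsto_of_le_of_le' hbneg hbound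
  · filter_upwards [eventually_gt_atTop 0] with r hrpos
    have h1 : 0 ≤ 2 * Real.exp (2 * r) * expInt (4 * r) := by
      have := expInt_nonneg (show (0:ℝ) < 4 * r by positivity)
      positivity
    have h2 : expInt (2 * r) ≤ Real.exp (-(2 * r)) / (2 * r) :=
      expInt_le (by positivity)
    simp only [hfun]
    linarith
  · filter_upwards [eventually_gt_atTop 0] with r hrpos
    have h1 : expInt (4 * r) ≤ Real.exp (-(4 * r)) / (4 * r) := expInt_le (by positivity)
    have h2 : 0 ≤ expInt (2 * r) := expInt_nonneg (by positivity)
    have hee : Real.exp (2 * r) * Real.exp (-(4 * r)) = Real.exp (-(2 * r)) := by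
      rw [← Real.exp_add]; ring_nf
    have h3 : 2 * Real.exp (2 * r) * expInt (4 * r) ≤ Real.exp (-(2 * r)) / (2 * r) := by
      have := mul_le_mul_of_nonneg_left h1 (show (0:ℝ) ≤ 2 * Real.exp (2 * r) by positivity)
      calc 2 * Real.exp (2 * r) * expInt (4 * r)
          ≤ 2 * Real.exp (2 * r) * (Real.exp (-(4 * r)) / (4 * r)) := this
        _ = Real.exp (-(2 * r)) / (2 * r) := by
            rw [← hee]
            field_simp
            ring
    simp only [hfun]
    linarith

lemma hfun_strictAntiOn : StrictAntiOn hfun (Set.Ioi 0) := by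
  apply strictAntiOn_of_deriv_neg (convex_Ioi 0)
  · exact fun r hr => ((hfun_hasDerivAt hr).continuousAt).continuousWithinAt
  · intro r hr
    rw [interior_Ioi] at hr
    rw [deriv_hfun_eq hr]
    have := int_pos hr
    have := Real.exp_pos (2 * r)
    nlinarith

/-- `h` is strictly positive and strictly decreasing on `(0,∞)`; indeed its derivative is
`h'(r) = -e^{2r} ∫_r^∞ e^{-4s} s^{-2} ds < 0`. -/
theorem hfun_pos_strictAnti :
    (∀ r > (0:ℝ), 0 < hfun r) ∧ StrictAntiOn hfun (Set.Ioi 0) ∧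
    ∀ r > (0:ℝ),
      deriv hfun r = -(Real.exp (2 * r) * ∫ s in Set.Ioi r, Real.exp (-4 * s) / s ^ 2) ∧
      deriv hfun r < 0 := by
  have hpos : ∀ r > (0:ℝ), 0 < hfun r := by
    intro r hr
    have hnn : 0 ≤ hfun (r + 1) := by
      refine le_of_tendsto hfun_tendsto ?_
      filter_upwards [eventually_gt_atTop (r + 1)] with s hs
      exact le_of_lt (hfun_strictAntiOn (Set.mem_Ioi.mpr (by linarith))
        (Set.mem_Ioi.mpr (by linarith)) hs)
    have hlt : hfun (r + 1) < hfun r := hfun_strictAntiOn (Set.mem_Ioi.mpr hr)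
      (Set.mem_Ioi.mpr (by linarith)) (by linarith)
    linarith
  refine ⟨hpos, hfun_strictAntiOn, fun r hr => ⟨deriv_hfun_eq hr, ?_⟩⟩
  rw [deriv_hfun_eq hr]
  have := int_pos hr
  have := Real.exp_pos (2 * r)
  nlinarith
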